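/- arXiv:1602.04079 — 3 statements merged into one kernel-verified Lean document; each statement's English description precedes it below -/
import Mathlib

section
/- Let D be a finite set and R = 𝔽₂[t_k : k ∈ D]/(t_k²). For α = Σ_{A,B} c_{A,B} e_A ⊗ e_B ∈ R ⊗ R define the induced operator α_* : R → R by α_*(e_I) = Σ_{A,B} c_{A,B} deg(e_I e_A) e_B, where deg extracts the coefficient of e_D. Set x_J = ∏_{k∈J}(e_k⊗1 + 1⊗e_k). Then for all I, J ⊆ D: (x_J)_*(e_I) = e_{I∩J} if I ∪ J = D, and (x_J)_*(e_I) = 0 otherwise. -/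
open MvPolynomial Finset

set_option synthInstance.maxHeartbeats 1000000
set_option maxHeartbeats 1000000

/-- The quotient ring 𝔽₂[t_k : k ∈ D]/(t_k²). -/
abbrev Rq (D : Type*) : Type _ :=
  MvPolynomial D (ZMod 2) ⧸
    Ideal.span (Set.range fun k : D => (X k : MvPolynomial D (ZMod 2)) ^ 2)

/-- The class of the square-free monomial ∏_{k ∈ I} t_k. -/
noncomputable def eMon {D : Type*} (I : Finset D) : Rq D :=
  Ideal.Quotient.mk _ (∏ k ∈ I, X k)

lemma eMon_mul {D : Type*} [DecidableEq D] (I J : Finset D) :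
    eMon I * eMon J = if Disjoint I J then eMon (I ∪ J) else 0 := by
  unfold eMon
  rw [← map_mul]
  split_ifs with h
  · rw [← Finset.prod_union h]
  · rw [Finset.not_disjoint_iff] at h
    obtain ⟨k, hkI, hkJ⟩ := h
    rw [Ideal.Quotient.eq_zero_iff_mem]
    have : (∏ i ∈ I, X i) * ∏ i ∈ J, X i
        = (X k : MvPolynomial D (ZMod 2)) ^ 2 *
          ((∏ i ∈ I.erase k, X i) * ∏ i ∈ J.erase k, X i) := by
      rw [← Finset.mul_prod_erase I X hkI, ← Finset.mul_prod_erase J X hkJ]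
      ring
    rw [this]
    exact Ideal.mul_mem_right _ _ (Ideal.subset_span ⟨k, rfl⟩)

/-- Lemma 5.5: (x_J)_*(e_I) = e_{I∩J} if I ∪ J = D and 0 otherwise, where
(x_J)_*(e_I) = Σ_{J₁⊆J} deg(e_I e_{J₁}) e_{J∖J₁}. -/
theorem xJ_star_eMon {D : Type*} [Fintype D] [DecidableEq D]
    (deg : Rq D →ₗ[ZMod 2] ZMod 2)
    (hdeg : ∀ I : Finset D, deg (eMon I) = if I = Finset.univ then 1 else 0)
    (I J : Finset D) :
    (∑ J₁ ∈ J.powerset, deg (eMon I * eMon J₁) • eMon (J \ J₁))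
      = if I ∪ J = Finset.univ then eMon (I ∩ J) else 0 := by
  have key : ∀ J₁ : Finset D, deg (eMon I * eMon J₁) = if J₁ = Iᶜ then 1 else 0 := by
    intro J₁
    rw [eMon_mul]
    by_cases h : J₁ = Iᶜ
    · subst h
      rw [if_pos disjoint_compl_right, hdeg, if_pos (by simp), if_pos rfl]
    · rw [if_neg h]
      by_cases hd : Disjoint I J₁
      · rw [if_pos hd, hdeg, if_neg]
        intro hu
        apply h
        ext k
        simp only [Finset.mem_compl]
        constructor
        · intro hk hkI
          exact (Finset.disjoint_left.mp hd) hkI hk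
        · intro hk
          rcases Finset.mem_union.mp (hu ▸ Finset.mem_univ k : k ∈ I ∪ J₁) with h' | h'
          · exact absurd h' hk
          · exact h'
      · rw [if_neg hd, map_zero]
  have hterm : ∀ J₁ : Finset D, deg (eMon I * eMon J₁) • eMon (J \ J₁)
      = if J₁ = Iᶜ then eMon (J \ J₁) else 0 := by
    intro J₁
    rw [key]
    split_ifs <;> simp
  rw [Finset.sum_congr rfl fun J₁ _ => hterm J₁, Finset.sum_ite_eq' J.powerset Iᶜ]
  have hmem : Iᶜ ∈ J.powerset ↔ I ∪ J = Finset.univ := by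
    simp only [Finset.mem_powerset]
    constructor
    · intro hs
      ext k
      simp only [Finset.mem_union, Finset.mem_univ, iff_true]
      by_cases hk : k ∈ I
      · exact Or.inl hk
      · exact Or.inr (hs (Finset.mem_compl.mpr hk))
    · intro hu k hk
      rcases Finset.mem_union.mp (hu ▸ Finset.mem_univ k : k ∈ I ∪ J) with h' | h'
      · exact absurd h' (Finset.mem_compl.mp hk)
      · exact h'
  have hsd : J \ Iᶜ = I ∩ J := by
    ext k; simp only [Finset.mem_sdiff, Finset.mem_compl, Finset.mem_inter, not_not]
    tauto
  split_ifs with h1 h2 h2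
  · rw [hsd]
  · exact absurd (hmem.mp h1) h2
  · exact absurd (hmem.mpr h2) h1
  · rfl
end

section
/- Let D be a finite set of pairwise distinct positive integers, and let R = 𝔽₂[t_k : k ∈ D]/(t_k²), graded by assigning degree k to t_k. Let B ⊆ R be a subring spanned by homogeneous elements and closed under all operators (x_J)_* for J ⊆ D (where (x_J)_*(e_I) = e_{I∩J} if I∪J = D and 0 otherwise, extended linearly). Then B is generated as a ring by the set {e_k : k ∈ D, e_k ∈ B}; equivalently, B is spanned over 𝔽₂ by the monomials e_I with I ⊆ {k ∈ D : e_k ∈ B}. -/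
open MvPolynomial Finset

set_option synthInstance.maxHeartbeats 1000000
set_option maxHeartbeats 1000000

namespace Aux57

variable {D : Finset ℕ}

/-- The exponent function of the squarefree monomial with support `I`. -/
noncomputable def ind (I : Finset ↥D) : ↥D →₀ ℕ := ∑ k ∈ I, Finsupp.single k 1

lemma ind_apply (I : Finset ↥D) (j : ↥D) : ind I j = if j ∈ I then 1 else 0 := by
  classical
  simp [ind, Finsupp.finset_sum_apply, Finsupp.single_apply]

lemma ind_inj : Function.Injective (ind (D := D)) := by
  intro I J h
  ext j
  have h1 := congrArg (fun f => f j) h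
  simp only [ind_apply] at h1
  split_ifs at h1 <;> simp_all

lemma prodX (I : Finset ↥D) :
    (∏ k ∈ I, (X k : MvPolynomial ↥D (ZMod 2))) = monomial (ind I) 1 := by
  classical
  induction I using Finset.induction with
  | empty => simp [ind]
  | insert _ _ h ih =>
      rw [Finset.prod_insert h, ih, X, monomial_mul, one_mul]
      congr 1
      rw [ind, ind, Finset.sum_insert h]

lemma coeff_zero_of_mem {p : MvPolynomial ↥D (ZMod 2)}
    (hp : p ∈ Ideal.span (Set.range fun k : ↥D => (X k : MvPolynomial ↥D (ZMod 2)) ^ 2)) :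
    ∀ m : ↥D →₀ ℕ, (∀ k, m k ≤ 1) → coeff m p = 0 := by
  classical
  rw [← Ideal.submodule_span_eq] at hp
  induction hp using Submodule.span_induction with
  | mem x hx =>
      obtain ⟨k, rfl⟩ := hx
      intro m hm
      rw [coeff_X_pow]
      have hne : ¬(Finsupp.single k 2 = m) := by
        intro h
        have := hm k
        rw [← h] at this
        simp at this
      simp [hne]
  | zero => simp
  | add x y hx hy ihx ihy =>
      intro m hm
      rw [coeff_add, ihx m hm, ihy m hm, add_zero]
  | smul r x hx ih =>
      intro m hm
      rw [smul_eq_mul, coeff_mul]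
      apply Finset.sum_eq_zero
      rintro ⟨a, b⟩ hab
      rw [Finset.HasAntidiagonal.mem_antidiagonal] at hab
      have hb : ∀ k, b k ≤ 1 := by
        intro k
        have : b k ≤ m k := by
          rw [← hab]; simp
        exact le_trans this (hm k)
      rw [ih b hb, mul_zero]

lemma eMon_inj : Function.Injective (eMon (D := ↥D)) := by
  intro I J h
  rw [eMon, eMon, Ideal.Quotient.eq] at h
  have hc := coeff_zero_of_mem h (ind I) (by
    intro k; rw [ind_apply]; split <;> omega)
  rw [coeff_sub, prodX, prodX, coeff_monomial, coeff_monomial] at hc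
  by_cases hij : ind J = ind I
  · exact ind_inj (ind_inj.eq_iff.mpr rfl ▸ hij).symm
  · simp [hij] at hc

lemma eMon_prod (I : Finset ↥D) : eMon I = ∏ k ∈ I, eMon ({k} : Finset ↥D) := by
  simp only [eMon, Finset.prod_singleton]
  rw [map_prod]

lemma main (D : Finset ℕ) (hpos : ∀ k ∈ D, 0 < k)
    (B : Subalgebra (ZMod 2) (Rq ↥D))
    (op : Finset ↥D → (Rq ↥D →ₗ[ZMod 2] Rq ↥D))
    (hop : ∀ (J I : Finset ↥D),
      op J (eMon I) = if I ∪ J = Finset.univ then eMon (I ∩ J) else 0)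
    (hclosed : ∀ (J : Finset ↥D), ∀ x ∈ B, op J x ∈ B) :
    ∀ d : ℕ, ∀ S : Finset (Finset ↥D), (∀ I ∈ S, (∑ k ∈ I, (k : ℕ)) = d) →
      (∑ I ∈ S, eMon I) ∈ B → ∀ I ∈ S, ∀ k ∈ I, eMon ({k} : Finset ↥D) ∈ B := by
  classical
  intro d
  induction d using Nat.strong_induction_on with
  | _ d IH =>
  intro S hdeg hsum
  have L : ∀ I ∈ S, ∀ k ∈ I, I ≠ {k} → eMon ({k} : Finset ↥D) ∈ B := by
    intro I hI k hk hne
    set e := I.erase k with he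
    have h2 : (k : ℕ) + ∑ j ∈ e, (j : ℕ) = d := by
      rw [he, Finset.add_sum_erase _ _ hk]; exact hdeg I hI
    have hkd : (k : ℕ) < d := by
      have hne' : e.Nonempty := by
        by_contra hcon
        rw [Finset.not_nonempty_iff_eq_empty, he] at hcon
        apply hne
        apply Finset.eq_singleton_iff_unique_mem.2 ⟨hk, ?_⟩
        intro x hx
        by_contra hxk
        exact (Finset.notMem_empty x) (hcon ▸ Finset.mem_erase.2 ⟨hxk, hx⟩)
      obtain ⟨j, hj⟩ := hne'
      have hjpos : 0 < (j : ℕ) := hpos j.1 j.2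
      have hle : (j : ℕ) ≤ ∑ j ∈ e, (j : ℕ) :=
        Finset.single_le_sum (fun _ _ => Nat.zero_le _) hj
      omega
    set J := Iᶜ ∪ {k} with hJ
    have hcond : ∀ I' : Finset ↥D, (I' ∪ J = univ) ↔ e ⊆ I' := by
      intro I'
      simp only [hJ, he, Finset.eq_univ_iff_forall, Finset.subset_iff, Finset.mem_union,
        Finset.mem_compl, Finset.mem_erase, Finset.mem_singleton]
      constructor
      · intro h x hx
        rcases h x with h1 | h1 | h1 <;> tauto
      · intro h x
        by_cases h1 : x ∈ I'
        · tauto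
        · by_cases h2 : x = k
          · tauto
          · by_cases h3 : x ∈ I
            · exact absurd (h ⟨h2, h3⟩) h1
            · tauto
    have hinter : ∀ I' : Finset ↥D, I' ∩ J = I' \ e := by
      intro I'
      ext x
      simp only [hJ, he, Finset.mem_inter, Finset.mem_union, Finset.mem_compl,
        Finset.mem_sdiff, Finset.mem_erase, Finset.mem_singleton]
      tauto
    have key : op J (∑ I' ∈ S, eMon I')
        = ∑ I' ∈ S.filter (fun I' => e ⊆ I'), eMon (I' \ e) := by
      rw [map_sum, Finset.sum_filter]
      apply Finset.sum_congr rfl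
      intro I' _
      rw [hop]
      by_cases h : e ⊆ I'
      · rw [if_pos ((hcond I').2 h), if_pos h, hinter]
      · rw [if_neg (fun hu => h ((hcond I').1 hu)), if_neg h]
    set Q := S.filter (fun I' => e ⊆ I') with hQ
    have hinj : ∀ a ∈ Q, ∀ b ∈ Q, a \ e = b \ e → a = b := by
      intro a ha b hb h
      have ha' : e ⊆ a := (Finset.mem_filter.1 ha).2
      have hb' : e ⊆ b := (Finset.mem_filter.1 hb).2
      rw [← Finset.sdiff_union_of_subset ha', ← Finset.sdiff_union_of_subset hb', h]
    set T := Q.image (fun I' => I' \ e) with hT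
    have hsum2 : (∑ t ∈ T, eMon t) ∈ B := by
      rw [hT, Finset.sum_image hinj, ← key]
      exact hclosed J _ hsum
    have hdegT : ∀ t ∈ T, (∑ j ∈ t, (j : ℕ)) = (k : ℕ) := by
      intro t ht
      obtain ⟨I', hI'Q, rfl⟩ := Finset.mem_image.1 ht
      have hsub : e ⊆ I' := (Finset.mem_filter.1 hI'Q).2
      have h1 : ∑ j ∈ I' \ e, (j : ℕ) + ∑ j ∈ e, (j : ℕ) = ∑ j ∈ I', (j : ℕ) :=
        Finset.sum_sdiff hsub
      have h3 := hdeg I' (Finset.mem_filter.1 hI'Q).1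
      omega
    have hkT : ({k} : Finset ↥D) ∈ T := by
      apply Finset.mem_image.2
      exact ⟨I, Finset.mem_filter.2 ⟨hI, Finset.erase_subset _ _⟩, Finset.sdiff_erase_self hk⟩
    exact IH (k : ℕ) hkd T hdegT hsum2 {k} hkT k (Finset.mem_singleton_self k)
  intro I hI k hk
  by_cases hne : I = {k}
  · subst hne
    have hdk : d = (k : ℕ) := by
      have := hdeg {k} hI
      simpa using this.symm
    have hother : ∀ I' ∈ S.erase {k}, eMon I' ∈ B := by
      intro I' hI'
      rw [eMon_prod]
      apply prod_mem
      intro j hj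
      apply L I' (Finset.mem_of_mem_erase hI') j hj
      intro hsing
      have hjd : (j : ℕ) = d := by
        have := hdeg I' (Finset.mem_of_mem_erase hI')
        rw [hsing] at this
        simpa using this
      have hjk : j = k := Subtype.ext (by omega)
      exact (Finset.ne_of_mem_erase hI') (by rw [hsing, hjk])
    have hrepr : eMon ({k} : Finset ↥D)
        = (∑ I'' ∈ S, eMon I'') - ∑ I' ∈ S.erase {k}, eMon I' := by
      rw [← Finset.add_sum_erase _ _ hI]
      ring
    rw [hrepr]
    exact sub_mem hsum (sum_mem hother)
  · exact L I hI k hk hne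

end Aux57

/-- Theorem 5.7 (algebraic form): a homogeneously-spanned subring of
𝔽₂[t_k : k∈D]/(t_k²) (graded with deg t_k = k) closed under all operators
(x_J)_* is spanned by the monomials e_I with all e_k, k ∈ I, in the subring. -/
theorem rational_subring_generated_by_generators
    (D : Finset ℕ) (hpos : ∀ k ∈ D, 0 < k)
    (B : Subalgebra (ZMod 2) (Rq ↥D))
    -- B is spanned by its homogeneous elements
    (hhom : Subalgebra.toSubmodule B = Submodule.span (ZMod 2)
      {x : Rq ↥D | x ∈ B ∧ ∃ d : ℕ, x ∈ Submodule.span (ZMod 2)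
        {y : Rq ↥D | ∃ I : Finset ↥D, (∑ k ∈ I, (k : ℕ)) = d ∧ y = eMon I}})
    -- the operators (x_J)_*
    (op : Finset ↥D → (Rq ↥D →ₗ[ZMod 2] Rq ↥D))
    (hop : ∀ (J I : Finset ↥D),
      op J (eMon I) = if I ∪ J = Finset.univ then eMon (I ∩ J) else 0)
    -- B is closed under all the operators (x_J)_*
    (hclosed : ∀ (J : Finset ↥D), ∀ x ∈ B, op J x ∈ B) :
    Subalgebra.toSubmodule B = Submodule.span (ZMod 2)
      {y : Rq ↥D | ∃ I : Finset ↥D, (∀ k ∈ I, eMon {k} ∈ B) ∧ y = eMon I} := by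
  classical
  apply le_antisymm
  · rw [hhom]
    apply Submodule.span_le.2
    rintro x ⟨hxB, d, hxspan⟩
    rw [Submodule.mem_span_set] at hxspan
    obtain ⟨c, hsupp, hsum⟩ := hxspan
    have hone : ∀ a : ZMod 2, a ≠ 0 → a = 1 := by decide
    have hx : x = ∑ y ∈ c.support, y := by
      rw [← hsum, Finsupp.sum]
      apply Finset.sum_congr rfl
      intro y hy
      rw [hone (c y) (Finsupp.mem_support_iff.1 hy), one_smul]
    have hchoice : ∀ y ∈ c.support,
        ∃ I : Finset ↥D, (∑ k ∈ I, (k : ℕ)) = d ∧ y = eMon I := fun y hy => hsupp hy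
    choose! f hf1 hf2 using hchoice
    have hinj : ∀ a ∈ c.support, ∀ b ∈ c.support, f a = f b → a = b := by
      intro a ha b hb h
      rw [hf2 a ha, hf2 b hb, h]
    set S := c.support.image f with hS
    have hxS : x = ∑ I ∈ S, eMon I := by
      rw [hS, Finset.sum_image hinj, hx]
      exact Finset.sum_congr rfl fun y hy => (hf2 y hy)
    have hdeg : ∀ I ∈ S, (∑ k ∈ I, (k : ℕ)) = d := by
      rintro I hI
      obtain ⟨y, hy, rfl⟩ := Finset.mem_image.1 hI
      exact hf1 y hy
    have hgood := Aux57.main D hpos B op hop hclosed d S hdeg (hxS ▸ hxB)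
    show x ∈ Submodule.span (ZMod 2)
      {y : Rq ↥D | ∃ I : Finset ↥D, (∀ k ∈ I, eMon {k} ∈ B) ∧ y = eMon I}
    rw [hxS]
    exact sum_mem fun I hI => Submodule.subset_span ⟨I, fun k hk => hgood I hI k hk, rfl⟩
  · apply Submodule.span_le.2
    rintro y ⟨I, hgood, rfl⟩
    show eMon I ∈ B
    rw [Aux57.eMon_prod]
    exact prod_mem fun k hk => hgood k hk
end

section
/- Let D be a finite set, R = 𝔽₂[t_k : k∈D]/(t_k²), J ⊆ D, J̄ = D∖J. For S ⊆ J̄ and L, L' ⊆ J define θ_{S,L,L'} = Σ_{M⊆S} e_{M∪L} ⊗ e_{(S∖M) ∪ (J∖L')} ∈ R ⊗_{𝔽₂} R. Then the family {θ_{S,L,L'} : S ⊆ J̄, L, L' ⊆ J} is linearly independent over 𝔽₂ (of cardinality 2^{|J̄| + 2|J|}). -/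
open MvPolynomial Finset

set_option synthInstance.maxHeartbeats 1000000
set_option maxHeartbeats 1000000

open scoped TensorProduct

namespace ThetaAux

variable {D : Type*} [DecidableEq D]

/-- The multidegree of the squarefree monomial on `A`. -/
noncomputable def deg (A : Finset D) : D →₀ ℕ := ∑ k ∈ A, Finsupp.single k 1

lemma deg_apply (A : Finset D) (j : D) : deg A j = if j ∈ A then 1 else 0 := by
  classical
  simp only [deg, Finset.sum_apply', Finsupp.single_apply]
  split_ifs with h
  · rw [Finset.sum_eq_single_of_mem j h] <;> simp +contextual
  · exact Finset.sum_eq_zero fun k hk => by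
      simp [show ¬ k = j from fun e => h (e ▸ hk)]

lemma deg_le_one (A : Finset D) (k : D) : deg A k ≤ 1 := by
  rw [deg_apply]; split <;> simp

lemma deg_inj {A B : Finset D} (h : deg A = deg B) : A = B := by
  ext j
  have := congrFun (congrArg (fun f : D →₀ ℕ => (f : D → ℕ)) h) j
  simp only [deg_apply] at this
  by_cases hA : j ∈ A <;> by_cases hB : j ∈ B <;> simp_all

lemma prod_X_eq (A : Finset D) :
    (∏ k ∈ A, X k : MvPolynomial D (ZMod 2)) = monomial (deg A) 1 := by
  have := prod_X_pow_eq_monomial (s := deg A) (R := ZMod 2)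
  rw [← this]
  have hsupp : (deg A).support = A := by
    ext j; simp [Finsupp.mem_support_iff, deg_apply]
  rw [hsupp]
  exact Finset.prod_congr rfl fun k hk => by rw [deg_apply, if_pos hk, pow_one]

lemma coeff_deg_eq_zero_of_mem (A : Finset D) {x : MvPolynomial D (ZMod 2)}
    (hx : x ∈ Ideal.span (Set.range fun k : D => (X k : MvPolynomial D (ZMod 2)) ^ 2)) :
    coeff (deg A) x = 0 := by
  have key : ∀ (m : D →₀ ℕ), (∀ k, m k ≤ 1) → coeff m x = 0 := by
    induction hx using Submodule.span_induction with
    | mem y hy =>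
      obtain ⟨k, rfl⟩ := hy
      intro m hm
      dsimp only
      rw [X_pow_eq_monomial, ← one_mul (monomial _ _), coeff_mul_monomial']
      rw [if_neg]
      intro hle
      have := hle k
      simp [Finsupp.single_apply] at this
      exact absurd (le_trans this (hm k)) (by norm_num)
    | zero => intro m _; simp
    | add y z _ _ hy hz => intro m hm; simp [coeff_add, hy m hm, hz m hm]
    | smul r y _ hy =>
      intro m hm
      rw [smul_eq_mul, coeff_mul]
      refine Finset.sum_eq_zero fun ab hab => ?_
      rw [Finset.HasAntidiagonal.mem_antidiagonal] at hab
      have : coeff ab.2 y = 0 := by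
        refine hy ab.2 fun k => le_trans ?_ (hm k)
        have : ab.1 k + ab.2 k = m k := by rw [← Finsupp.add_apply, hab]
        omega
      rw [this, mul_zero]
  exact key (deg A) (deg_le_one A)

/-- The coefficient of the squarefree monomial on `A`, as a linear functional on `Rq D`. -/
noncomputable def coeffQ (A : Finset D) : Rq D →ₗ[ZMod 2] ZMod 2 :=
  (Submodule.liftQ
      ((Ideal.span (Set.range fun k : D => (X k : MvPolynomial D (ZMod 2)) ^ 2)).restrictScalars
        (ZMod 2))
      (lcoeff (ZMod 2) (deg A))
      (fun x hx => coeff_deg_eq_zero_of_mem A (by simpa using hx))).comp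
    (Submodule.Quotient.restrictScalarsEquiv (ZMod 2) _).symm.toLinearMap

lemma coeffQ_mk (A : Finset D) (f : MvPolynomial D (ZMod 2)) :
    coeffQ A (Ideal.Quotient.mk _ f) = coeff (deg A) f := by
  rfl

lemma coeffQ_eMon (A I : Finset D) :
    coeffQ A (eMon I) = if I = A then 1 else 0 := by
  rw [eMon, coeffQ_mk, prod_X_eq, coeff_monomial]
  by_cases h : I = A
  · subst h; simp
  · rw [if_neg fun e => h (deg_inj e), if_neg h]

/-- The coefficient of `e_A ⊗ e_B`, as a linear functional on `Rq D ⊗ Rq D`. -/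
noncomputable def coeffT (A B : Finset D) : (Rq D ⊗[ZMod 2] Rq D) →ₗ[ZMod 2] ZMod 2 :=
  (TensorProduct.lid (ZMod 2) (ZMod 2)).toLinearMap.comp
    (TensorProduct.map (coeffQ A) (coeffQ B))

lemma coeffT_eMon (A B I K : Finset D) :
    coeffT A B (eMon I ⊗ₜ[ZMod 2] eMon K) = if I = A ∧ K = B then 1 else 0 := by
  simp only [coeffT, LinearMap.comp_apply, TensorProduct.map_tmul, LinearEquiv.coe_toLinearMap,
    TensorProduct.lid_tmul, coeffQ_eMon, smul_eq_mul]
  by_cases h1 : I = A <;> by_cases h2 : K = B <;> simp [h1, h2]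

lemma key_combinatorial [Fintype D] {J S S' L₁ L₂ L₁' L₂' M : Finset D}
    (hS : S ⊆ Jᶜ) (hS' : S' ⊆ Jᶜ) (hL₂ : L₂ ⊆ J)
    (hL₁' : L₁' ⊆ J) (hL₂' : L₂' ⊆ J) (hM : M ⊆ S) :
    (M ∪ L₁ = L₂ ∧ (S \ M) ∪ (J \ L₁') = S' ∪ (J \ L₂')) ↔
      (M = ∅ ∧ S = S' ∧ L₁ = L₂ ∧ L₁' = L₂') := by
  constructor
  · rintro ⟨h1, h2⟩
    have hM0 : M = ∅ := by
      ext x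
      simp only [Finset.notMem_empty, iff_false]
      intro hx
      have hxJ : x ∉ J := by simpa [Finset.mem_compl] using hS (hM hx)
      exact hxJ (hL₂ (h1 ▸ Finset.mem_union_left _ hx))
    subst hM0
    simp only [Finset.empty_union, Finset.sdiff_empty] at h1 h2
    have h2' := Finset.ext_iff.mp h2
    have hSS : S = S' := by
      ext x
      have hx2 := h2' x
      simp only [Finset.mem_union, Finset.mem_sdiff] at hx2
      constructor
      · intro hx
        have hxJ : x ∉ J := by simpa [Finset.mem_compl] using hS hx
        rcases hx2.mp (Or.inl hx) with h | h
        · exact h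
        · exact absurd h.1 hxJ
      · intro hx
        have hxJ : x ∉ J := by simpa [Finset.mem_compl] using hS' hx
        rcases hx2.mpr (Or.inl hx) with h | h
        · exact h
        · exact absurd h.1 hxJ
    have hLL : L₁' = L₂' := by
      ext x
      have hx2 := h2' x
      simp only [Finset.mem_union, Finset.mem_sdiff] at hx2
      constructor
      · intro hx
        have hxJ := hL₁' hx
        by_contra hx'
        rcases hx2.mpr (Or.inr ⟨hxJ, hx'⟩) with h | h
        · have : x ∉ J := by simpa [Finset.mem_compl] using hS h
          exact this hxJ
        · exact h.2 hx
      · intro hx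
        have hxJ := hL₂' hx
        by_contra hx'
        rcases hx2.mp (Or.inr ⟨hxJ, hx'⟩) with h | h
        · have : x ∉ J := by simpa [Finset.mem_compl] using hS' h
          exact this hxJ
        · exact h.2 hx
    exact ⟨rfl, hSS, h1, hLL⟩
  · rintro ⟨rfl, rfl, rfl, rfl⟩
    simp

end ThetaAux

open ThetaAux in
/-- Lemma 9.1(i): the family θ_{S,L,L'} = Σ_{M⊆S} e_{M∪L} ⊗ e_{(S∖M)∪(J∖L')},
for S ⊆ J̄ and L, L' ⊆ J, is linearly independent over 𝔽₂. -/
theorem theta_family_linearIndependent {D : Type*} [Fintype D] [DecidableEq D]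
    (J : Finset D) :
    LinearIndependent (ZMod 2)
      (fun p : {S : Finset D // S ⊆ Jᶜ} × {L : Finset D // L ⊆ J} ×
          {L' : Finset D // L' ⊆ J} =>
        ∑ M ∈ (p.1 : Finset D).powerset,
          eMon (M ∪ (p.2.1 : Finset D)) ⊗ₜ[ZMod 2]
            eMon (((p.1 : Finset D) \ M) ∪ (J \ (p.2.2 : Finset D)))) := by
  classical
  rw [Fintype.linearIndependent_iff]
  intro g hg p
  obtain ⟨⟨S, hS⟩, ⟨L, hL⟩, ⟨L', hL'⟩⟩ := p
  set pp : {S : Finset D // S ⊆ Jᶜ} × {L : Finset D // L ⊆ J} × {L' : Finset D // L' ⊆ J} :=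
    ⟨⟨S, hS⟩, ⟨L, hL⟩, ⟨L', hL'⟩⟩ with hpp
  have hφ := congrArg (coeffT L (S ∪ (J \ L'))) hg
  rw [map_sum, map_zero] at hφ
  have hterm : ∀ q, coeffT L (S ∪ (J \ L'))
      (∑ M ∈ (q.1 : Finset D).powerset,
        eMon (M ∪ (q.2.1 : Finset D)) ⊗ₜ[ZMod 2]
          eMon (((q.1 : Finset D) \ M) ∪ (J \ (q.2.2 : Finset D)))) =
      if q = pp then 1 else 0 := by
    rintro ⟨⟨Sq, hSq⟩, ⟨Lq, hLq⟩, ⟨Lq', hLq'⟩⟩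
    rw [map_sum]
    have hrw : ∀ M ∈ Sq.powerset,
        coeffT L (S ∪ (J \ L'))
          (eMon (M ∪ Lq) ⊗ₜ[ZMod 2] eMon ((Sq \ M) ∪ (J \ Lq'))) =
        if M = ∅ ∧ Sq = S ∧ Lq = L ∧ Lq' = L' then 1 else 0 := by
      intro M hM
      rw [coeffT_eMon]
      congr 1
      rw [eq_iff_iff]
      exact key_combinatorial (J := J) hSq hS hL hLq' hL' (Finset.mem_powerset.mp hM)
    rw [Finset.sum_congr rfl hrw]
    by_cases hq : Sq = S ∧ Lq = L ∧ Lq' = L'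
    · obtain ⟨rfl, rfl, rfl⟩ := hq
      rw [if_pos rfl]
      simp only [and_true, eq_self_iff_true]
      rw [Finset.sum_ite_eq' Sq.powerset (∅ : Finset D) (fun _ => (1 : ZMod 2))]
      rw [if_pos (Finset.mem_powerset.mpr (Finset.empty_subset _))]
    · have hne : (⟨⟨Sq, hSq⟩, ⟨Lq, hLq⟩, ⟨Lq', hLq'⟩⟩ :
          {S : Finset D // S ⊆ Jᶜ} × {L : Finset D // L ⊆ J} × {L' : Finset D // L' ⊆ J}) ≠ pp := by
        simp only [hpp, ne_eq, Prod.ext_iff, Subtype.ext_iff]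
        tauto
      rw [if_neg hne]
      refine Finset.sum_eq_zero fun M _ => ?_
      have : ¬(M = ∅ ∧ Sq = S ∧ Lq = L ∧ Lq' = L') := by tauto
      rw [if_neg this]
  rw [Finset.sum_congr rfl (fun q _ => by
    rw [LinearMap.map_smul, hterm q, smul_eq_mul])] at hφ
  simp only [mul_ite, mul_one, mul_zero] at hφ
  rw [Finset.sum_ite_eq' Finset.univ pp g, if_pos (Finset.mem_univ _)] at hφ
  exact hφ
end
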